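/- For any prime p and integer d ≥ 1, the maximum Z_p(d) := max_M r_p(M,d) satisfies Z_p(d) ≥ C_1 · d^{(log_{p+1}(d)−3)/2} / Γ(log_{p+1}(d)+1), where C_1 = (1/2)·∏_{j=1}^∞ (1 − 1/((p+1)^j + 1)). -/

import Mathlib

/-- `r_p(M,d)`: the number of finitely supported nonincreasing sequences `m` of nonnegative
integers with `m 0 ≤ d` and `Σ m_i p^i = M`. -/
noncomputable def rp (p : ℤ) (M d : ℤ) : ℕ :=
  {m : ℕ →₀ ℤ | (∀ i, 0 ≤ m i) ∧ (∀ i, m (i + 1) ≤ m i) ∧ m 0 ≤ d ∧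
    (m.sum fun i a => a * p ^ i) = M}.ncard

/-- `Z_p(d) = max_M r_p(M,d)`. -/
noncomputable def Zp (p : ℤ) (d : ℤ) : ℕ :=
  sSup {n : ℕ | ∃ M : ℤ, rp p M d = n}

/-- `C_1 = (1/2)·∏_{j=1}^∞ (1 − 1/((p+1)^j + 1))`. -/
noncomputable def C1 (p : ℕ) : ℝ :=
  (1 / 2) * ∏' j : ℕ, (1 - 1 / (((p : ℝ) + 1) ^ (j + 1) + 1))

namespace Stmt17

/-- repunit `1 + p + ... + p^(s-1)` -/
def Rf (p s : ℕ) : ℕ := ∑ i ∈ Finset.range s, p ^ i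

lemma Rf_succ (p s : ℕ) : Rf p (s + 1) = Rf p s + p ^ s := Finset.sum_range_succ _ _

lemma Rf_one_le (p s : ℕ) : 1 ≤ Rf p (s + 1) := by
  have : p ^ 0 ≤ Rf p (s + 1) :=
    Finset.single_le_sum (f := fun i => p ^ i) (fun i _ => Nat.zero_le _)
      (Finset.mem_range.mpr (Nat.succ_pos s))
  simpa using this

lemma le_Rf (p s : ℕ) (hp : 1 ≤ p) : s ≤ Rf p s := by
  calc s = ∑ _i ∈ Finset.range s, 1 := by simp
  _ ≤ Rf p s := Finset.sum_le_sum fun i _ => Nat.one_le_pow _ _ hp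

lemma Rf_le_pow (p s : ℕ) (hp : 2 ≤ p) : Rf p s ≤ p ^ s := by
  induction s with
  | zero => simp [Rf]
  | succ s ih =>
      rw [Rf_succ, pow_succ]
      have : Rf p s + p ^ s ≤ p ^ s + p ^ s := by omega
      refine this.trans ?_
      have hps : 1 ≤ p ^ s := Nat.one_le_pow _ _ (by omega)
      nlinarith

lemma two_Rf_le (p s : ℕ) (hp : 2 ≤ p) : 2 * Rf p s ≤ Rf p (s + 1) := by
  have := Rf_le_pow p s hp
  rw [Rf_succ]; omega

lemma two_pow_Rf_le (p s t : ℕ) (hp : 2 ≤ p) : 2 ^ t * Rf p s ≤ Rf p (s + t) := by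
  induction t with
  | zero => simp
  | succ t ih =>
      have h1 : 2 ^ (t + 1) * Rf p s = 2 * (2 ^ t * Rf p s) := by ring
      have h2 : 2 * (2 ^ t * Rf p s) ≤ 2 * Rf p (s + t) := by omega
      have h3 := two_Rf_le p (s + t) hp
      have h4 : s + (t + 1) = s + t + 1 := by omega
      rw [h4]; omega

lemma Rf_mono (p : ℕ) {s t : ℕ} (h : s ≤ t) : Rf p s ≤ Rf p t :=
  Finset.sum_le_sum_of_subset (Finset.range_subset_range.mpr h)

lemma Rf_le_q_pow (p s : ℕ) : Rf p (s + 1) ≤ (p + 1) ^ s := by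
  induction s with
  | zero => simp [Rf]
  | succ s ih =>
      rw [Rf_succ]
      have h1 : p ^ (s + 1) ≤ p * (p + 1) ^ s := by
        have : p ^ s ≤ (p + 1) ^ s := Nat.pow_le_pow_left (by omega) s
        calc p ^ (s + 1) = p * p ^ s := by ring
        _ ≤ p * (p + 1) ^ s := Nat.mul_le_mul_left _ this
      calc Rf p (s + 1) + p ^ (s + 1) ≤ (p + 1) ^ s + p * (p + 1) ^ s := by omega
      _ = (p + 1) ^ (s + 1) := by ring

/-- The set whose cardinality is `rp`. -/
def T (p : ℕ) (M : ℤ) (e : ℕ) : Set (ℕ →₀ ℤ) :=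
  {m : ℕ →₀ ℤ | (∀ i, 0 ≤ m i) ∧ (∀ i, m (i + 1) ≤ m i) ∧ m 0 ≤ (e : ℤ) ∧
    (m.sum fun i a => a * (p : ℤ) ^ i) = M}

lemma rp_eq (p : ℕ) (M : ℤ) (e : ℕ) : rp (p : ℤ) M (e : ℤ) = (T p M e).ncard := rfl

lemma anti {m : ℕ →₀ ℤ} (hm : ∀ i, m (i + 1) ≤ m i) : ∀ i j, i ≤ j → m j ≤ m i := by
  intro i j h
  induction j, h using Nat.le_induction with
  | base => exact le_refl _
  | succ j hij ih => exact (hm j).trans ih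

lemma sum_eq_range {p : ℕ} {m : ℕ →₀ ℤ} {N : ℕ} (h : m.support ⊆ Finset.range N) :
    (m.sum fun i a => a * (p : ℤ) ^ i) = ∑ i ∈ Finset.range N, m i * (p : ℤ) ^ i :=
  Finsupp.sum_of_support_subset m h _ (fun i _ => by simp)

lemma sum_nonneg_T {p : ℕ} {m : ℕ →₀ ℤ} (hnn : ∀ i, 0 ≤ m i) :
    0 ≤ (m.sum fun i a => a * (p : ℤ) ^ i) :=
  Finset.sum_nonneg fun i _ => mul_nonneg (hnn i) (pow_nonneg (by positivity) i)

lemma T_neg {p : ℕ} {M : ℤ} {e : ℕ} (hM : M < 0) : T p M e = ∅ := by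
  ext m
  simp only [T, Set.mem_setOf_eq, Set.mem_empty_iff_false, iff_false]
  rintro ⟨hnn, -, -, hsum⟩
  exact absurd (hsum ▸ sum_nonneg_T hnn) (not_le.mpr hM)

lemma T_zero {p : ℕ} {e : ℕ} (hp : 2 ≤ p) : T p 0 e ⊆ {0} := by
  rintro m ⟨hnn, -, -, hsum⟩
  simp only [Set.mem_singleton_iff]
  by_contra hm0
  obtain ⟨n, hn⟩ := Finsupp.support_nonempty_iff.mpr hm0
  have hterm : ∀ i ∈ m.support, 0 ≤ m i * (p : ℤ) ^ i :=
    fun i _ => mul_nonneg (hnn i) (pow_nonneg (by positivity) i)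
  have := (Finset.sum_eq_zero_iff_of_nonneg hterm).mp hsum n hn
  have hpp : (0:ℤ) < (p : ℤ) ^ n := by positivity
  have := Finsupp.mem_support_iff.mp hn
  rcases mul_eq_zero.mp ‹m n * (p:ℤ)^n = 0› with h | h
  · exact this h
  · exact absurd h hpp.ne'

/-- indicator of `[0, n]` with value `c` -/
noncomputable def chi (n : ℕ) (c : ℤ) : ℕ →₀ ℤ :=
  Finsupp.indicator (Finset.range (n + 1)) (fun _ _ => c)

lemma chi_apply (n : ℕ) (c : ℤ) (i : ℕ) : chi n c i = if i < n + 1 then c else 0 := by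
  by_cases h : i ∈ Finset.range (n + 1)
  · rw [chi, Finsupp.indicator_of_mem h, if_pos (Finset.mem_range.mp h)]
  · rw [chi, Finsupp.indicator_of_notMem h, if_neg (fun hh => h (Finset.mem_range.mpr hh))]

lemma chi_sum (p : ℕ) (n : ℕ) (c : ℤ) :
    ((chi n c).sum fun i a => a * (p : ℤ) ^ i) = c * (Rf p (n + 1) : ℤ) := by
  have hs : (chi n c).support ⊆ Finset.range (n + 1) := by
    intro i hi
    have := Finsupp.mem_support_iff.mp hi
    rw [chi_apply] at this
    by_contra h
    rw [if_neg (fun hh => h (Finset.mem_range.mpr hh))] at this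
    exact this rfl
  rw [sum_eq_range hs]
  have : ∀ i ∈ Finset.range (n + 1), chi n c i * (p:ℤ) ^ i = c * (p:ℤ) ^ i := by
    intro i hi
    rw [chi_apply, if_pos (Finset.mem_range.mp hi)]
  rw [Finset.sum_congr rfl this, ← Finset.mul_sum]
  congr 1
  simp [Rf]

/-- extraction map -/
noncomputable def Phi (m : ℕ →₀ ℤ) : ℕ × ℤ × (ℕ →₀ ℤ) :=
  (m.support.sup id, m (m.support.sup id), m - chi (m.support.sup id) (m (m.support.sup id)))

lemma Phi_inj : Function.Injective Phi := by
  intro m₁ m₂ h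
  have h1 : m₁.support.sup id = m₂.support.sup id := congrArg Prod.fst h
  have h2 : m₁ (m₁.support.sup id) = m₂ (m₂.support.sup id) := congrArg (fun x => x.2.1) h
  have h3 := congrArg (fun x : ℕ × ℤ × (ℕ →₀ ℤ) => x.2.2) h
  simp only [Phi] at h3
  rw [h1] at h2 h3
  rw [h2] at h3
  exact sub_left_inj.mp h3

lemma T_card (p : ℕ) (hp : 2 ≤ p) :
    ∀ (e : ℕ) (M : ℤ), (T p M e).Finite ∧ (T p M e).ncard ≤ (e + 1) ^ (2 * e) := by
  intro e
  induction e with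
  | zero =>
      intro M
      have hsub : T p M 0 ⊆ {0} := by
        rintro m ⟨hnn, hni, h0, -⟩
        have hm0 : m 0 = 0 := le_antisymm (by exact_mod_cast h0) (hnn 0)
        have : ∀ i, m i = 0 := fun i =>
          le_antisymm (hm0 ▸ anti hni 0 i (Nat.zero_le i)) (hnn i)
        exact Finsupp.ext this
      exact ⟨(Set.finite_singleton 0).subset hsub,
        le_trans (Set.ncard_le_ncard hsub (Set.finite_singleton 0)) (by simp)⟩
  | succ e ih =>
      intro M
      rcases lt_trichotomy M 0 with hM | hM | hM
      · rw [T_neg hM]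
        simp
      · subst hM
        refine ⟨(Set.finite_singleton 0).subset (T_zero hp), ?_⟩
        refine le_trans (Set.ncard_le_ncard (T_zero hp) (Set.finite_singleton 0)) ?_
        rw [Set.ncard_singleton]
        exact Nat.one_le_pow _ _ (by omega)
      · -- main case M > 0
        classical
        set Mn := M.toNat with hMndef
        have hMn : (Mn : ℤ) = M := Int.toNat_of_nonneg hM.le
        set W : Finset ℕ := (Finset.range Mn).filter
          (fun n => Rf p (n+1) ≤ Mn ∧ Mn ≤ (e+1+1) * Rf p (n+1)) with hWdef
        set P : Finset (ℕ × ℤ) := W ×ˢ Finset.Icc (1:ℤ) (e+1+1) with hPdef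
        have hfin' : ∀ pr : ℕ × ℤ, (T p (M - pr.2 * (Rf p (pr.1+1) : ℤ)) e).Finite :=
          fun pr => (ih _).1
        set G : ℕ × ℤ → Finset (ℕ × ℤ × (ℕ →₀ ℤ)) := fun pr =>
          (hfin' pr).toFinset.image (fun m' => (pr.1, pr.2, m')) with hGdef
        set FF : Finset (ℕ × ℤ × (ℕ →₀ ℤ)) := P.biUnion G with hFFdef
        have key1 : ∀ m ∈ T p M (e+1), Phi m ∈ FF := by
          intro m hm
          obtain ⟨hnn, hni, h0, hsum⟩ := hm
          have hm0 : m ≠ 0 := by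
            rintro rfl
            rw [Finsupp.sum_zero_index] at hsum
            omega
          have hne : m.support.Nonempty := Finsupp.support_nonempty_iff.mpr hm0
          set n := m.support.sup id with hndef
          have hnmem : n ∈ m.support := by
            have : m.support.max' hne ∈ m.support := Finset.max'_mem _ _
            rwa [Finset.max'_eq_sup', Finset.sup'_eq_sup hne id] at this
          have hnmax : ∀ i ∈ m.support, i ≤ n := fun i hi => Finset.le_sup (f := id) hi
          have hsupp : m.support ⊆ Finset.range (n+1) :=
            fun i hi => Finset.mem_range.mpr (Nat.lt_succ_of_le (hnmax i hi))
          have hsum' : ∑ i ∈ Finset.range (n+1), m i * (p:ℤ) ^ i = M := by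
            rw [← sum_eq_range hsupp]; exact hsum
          have hchain := anti hni
          have hmn1 : 1 ≤ m n := by
            have := Finsupp.mem_support_iff.mp hnmem
            have h2 := hnn n
            omega
          have h1le : ∀ i, i ≤ n → 1 ≤ m i := fun i hi => le_trans hmn1 (hchain i n hi)
          have hble : ∀ i, m i ≤ (e : ℤ) + 1 + 1 := by
            intro i
            have h1 := hchain 0 i (Nat.zero_le i)
            have h0' := h0
            push_cast at h0'
            omega
          have hRfcast : ((Rf p (n+1) : ℤ)) = ∑ i ∈ Finset.range (n+1), (p:ℤ) ^ i := by
            simp [Rf]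
          have hRle : (Rf p (n+1) : ℤ) ≤ M := by
            rw [hRfcast, ← hsum']
            refine Finset.sum_le_sum fun i hi => ?_
            have h1 : (1:ℤ) ≤ m i := h1le i (Nat.lt_succ_iff.mp (Finset.mem_range.mp hi))
            nlinarith [pow_pos (show (0:ℤ) < p by positivity) i]
          have hMle : M ≤ (e+1+1 : ℤ) * (Rf p (n+1) : ℤ) := by
            rw [hRfcast, ← hsum', Finset.mul_sum]
            refine Finset.sum_le_sum fun i hi => ?_
            have h1 := hble i
            have h2 : (0:ℤ) < (p:ℤ) ^ i := by positivity
            push_cast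
            nlinarith
          have hnW : n ∈ W := by
            rw [hWdef, Finset.mem_filter, Finset.mem_range]
            have hc1 : Rf p (n+1) ≤ Mn := by
              have h := hRle
              rw [← hMn] at h
              exact_mod_cast h
            have hc2 : Mn ≤ (e+1+1) * Rf p (n+1) := by
              have h := hMle
              rw [← hMn] at h
              exact_mod_cast h
            have hc3 : n < Mn := by
              have := le_Rf p (n+1) (by omega)
              omega
            exact ⟨hc3, hc1, hc2⟩
          set cn := m n with hcndef
          have hcnIcc : cn ∈ Finset.Icc (1:ℤ) (e+1+1) := by
            rw [Finset.mem_Icc]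
            have := hble n
            push_cast at this ⊢
            omega
          -- m' membership
          have hm' : m - chi n cn ∈ T p (M - cn * (Rf p (n+1) : ℤ)) e := by
            refine ⟨?_, ?_, ?_, ?_⟩
            · intro i
              rw [Finsupp.sub_apply, chi_apply]
              split_ifs with h
              · have := hchain i n (Nat.lt_succ_iff.mp h)
                omega
              · have := hnn i; omega
            · intro i
              rw [Finsupp.sub_apply, Finsupp.sub_apply, chi_apply, chi_apply]
              rcases Nat.lt_trichotomy (i+1) (n+1) with h | h | h
              · rw [if_pos h, if_pos (by omega)]
                have := hni i; omega
              · rw [if_neg (by omega), if_pos (by omega)]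
                have hin : i = n := by omega
                have hns : m (i+1) = 0 := by
                  by_contra hc
                  have := hnmax (i+1) (Finsupp.mem_support_iff.mpr hc)
                  omega
                rw [hns, hin]
                omega
              · rw [if_neg (by omega), if_neg (by omega)]
                have := hni i; omega
            · rw [Finsupp.sub_apply, chi_apply, if_pos (by omega)]
              push_cast at h0 ⊢
              omega
            · rw [Finsupp.sum_sub_index (fun a b₁ b₂ => sub_mul b₁ b₂ _), hsum, chi_sum]
          have : Phi m = (n, cn, m - chi n cn) := rfl
          rw [this, hFFdef, Finset.mem_biUnion]
          refine ⟨(n, cn), ?_, ?_⟩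
          · rw [hPdef, Finset.mem_product]; exact ⟨hnW, hcnIcc⟩
          · rw [hGdef, Finset.mem_image]
            exact ⟨m - chi n cn, (Set.Finite.mem_toFinset _).mpr hm', rfl⟩
        -- counting
        have himg : Phi '' (T p M (e+1)) ⊆ ↑FF := by
          rintro y ⟨m, hm, rfl⟩
          exact key1 m hm
        have hfinT : (T p M (e+1)).Finite := by
          have : (Phi '' (T p M (e+1))).Finite := FF.finite_toSet.subset himg
          exact Set.Finite.of_finite_image this (Phi_inj.injOn)
        refine ⟨hfinT, ?_⟩
        have h1 : (T p M (e+1)).ncard = (Phi '' (T p M (e+1))).ncard :=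
          (Set.ncard_image_of_injOn Phi_inj.injOn).symm
        have h2 : (Phi '' (T p M (e+1))).ncard ≤ (FF : Set (ℕ × ℤ × (ℕ →₀ ℤ))).ncard :=
          Set.ncard_le_ncard himg FF.finite_toSet
        rw [Set.ncard_coe_finset] at h2
        have hGcard : ∀ pr ∈ P, (G pr).card ≤ (e+1) ^ (2*e) := by
          intro pr _
          rw [hGdef]
          refine le_trans Finset.card_image_le ?_
          rw [← Set.ncard_eq_toFinset_card _ (hfin' pr)]
          exact (ih _).2
        have hFFcard : FF.card ≤ P.card * (e+1) ^ (2*e) := by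
          refine le_trans Finset.card_biUnion_le ?_
          calc ∑ pr ∈ P, (G pr).card ≤ ∑ _pr ∈ P, (e+1) ^ (2*e) :=
                Finset.sum_le_sum hGcard
          _ = P.card * (e+1) ^ (2*e) := by rw [Finset.sum_const, smul_eq_mul]
        have hWcard : W.card ≤ e + 2 := by
          rcases W.eq_empty_or_nonempty with h | hWne
          · simp [h]
          · set n₀ := W.min' hWne with hn0def
            have hsubW : W ⊆ Finset.Icc n₀ (n₀ + (e+1)) := by
              intro n hn
              have hn0le : n₀ ≤ n := Finset.min'_le _ _ hn
              have hmem := Finset.mem_filter.mp hn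
              have hmem0 := Finset.mem_filter.mp (W.min'_mem hWne)
              rw [Finset.mem_Icc]
              refine ⟨hn0le, ?_⟩
              have hh : 2 ^ (n - n₀) * Rf p (n₀+1) ≤ Rf p (n+1) := by
                have := two_pow_Rf_le p (n₀+1) (n - n₀) hp
                have heq : n₀ + 1 + (n - n₀) = n + 1 := by omega
                rwa [heq] at this
              have hRpos : 1 ≤ Rf p (n₀+1) := Rf_one_le p n₀
              have h2p : 2 ^ (n - n₀) * Rf p (n₀+1) ≤ (e+1+1) * Rf p (n₀+1) := by
                calc 2 ^ (n - n₀) * Rf p (n₀+1) ≤ Rf p (n+1) := hh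
                _ ≤ Mn := hmem.2.1
                _ ≤ (e+1+1) * Rf p (n₀+1) := hmem0.2.2
              have h2e : 2 ^ (n - n₀) ≤ e + 2 := by
                have := Nat.le_of_mul_le_mul_right h2p (by omega)
                omega
              have := Nat.lt_two_pow_self (n := n - n₀)
              omega
            calc W.card ≤ (Finset.Icc n₀ (n₀ + (e+1))).card := Finset.card_le_card hsubW
            _ = e + 2 := by rw [Nat.card_Icc]; omega
        have hPcard : P.card ≤ (e+2) * (e+2) := by
          rw [hPdef, Finset.card_product]
          have hIcc : (Finset.Icc (1:ℤ) (e+1+1)).card = e + 2 := by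
            rw [Int.card_Icc]
            omega
          rw [hIcc]
          exact Nat.mul_le_mul_right _ hWcard
        calc (T p M (e+1)).ncard ≤ FF.card := h1 ▸ h2
        _ ≤ P.card * (e+1) ^ (2*e) := hFFcard
        _ ≤ ((e+2) * (e+2)) * (e+1) ^ (2*e) := Nat.mul_le_mul_right _ hPcard
        _ ≤ ((e+2) * (e+2)) * (e+2) ^ (2*e) :=
            Nat.mul_le_mul_left _ (Nat.pow_le_pow_left (by omega) _)
        _ = (e+2) ^ (2*(e+1)) := by ring

lemma T_lower (p d : ℕ) (hp : 2 ≤ p) (k : ℕ) (t : ℕ → ℕ)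
    (hsum : ∑ j ∈ Finset.range k, t j * Rf p (j + 2) ≤ d) :
    ∏ j ∈ Finset.range k, (t j + 1) ≤ (T p (d : ℤ) d).ncard := by
  classical
  set Sx : (Fin k → ℕ) → ℕ := fun x => ∑ j : Fin k, x j * Rf p (j.1 + 2) with hSxdef
  set g : (Fin k → ℕ) → ℕ → ℤ := fun x i =>
    (if i = 0 then (d : ℤ) - (Sx x : ℤ) else 0) +
      ∑ j ∈ Finset.univ.filter (fun j : Fin k => i ≤ j.1 + 1), (x j : ℤ) with hgdef
  have hg0 : ∀ x i, k + 1 ≤ i → g x i = 0 := by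
    intro x i hi
    rw [hgdef]
    simp only
    rw [if_neg (by omega), Finset.filter_false_of_mem (fun j _ => by omega),
      Finset.sum_empty, add_zero]
  set F : (Fin k → ℕ) → (ℕ →₀ ℤ) := fun x => Finsupp.onFinset (Finset.range (k+1)) (g x)
    (fun a ha => Finset.mem_range.mpr (by by_contra h; exact ha (hg0 x a (by omega)))) with hFdef
  have hFapp : ∀ x i, F x i = g x i := fun x i => rfl
  set box : Finset (Fin k → ℕ) := Fintype.piFinset (fun j : Fin k => Finset.range (t j.1 + 1))
    with hboxdef
  have hSle : ∀ x ∈ box, Sx x ≤ d := by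
    intro x hx
    have hxle : ∀ j : Fin k, x j ≤ t j.1 := by
      intro j
      have := Fintype.mem_piFinset.mp hx j
      rw [Finset.mem_range] at this
      omega
    calc Sx x ≤ ∑ j : Fin k, t j.1 * Rf p (j.1 + 2) :=
          Finset.sum_le_sum fun j _ => Nat.mul_le_mul_right _ (hxle j)
    _ = ∑ j ∈ Finset.range k, t j * Rf p (j + 2) :=
          Fin.sum_univ_eq_sum_range (fun j => t j * Rf p (j + 2)) k
    _ ≤ d := hsum
  have hxSle : ∀ x : Fin k → ℕ, ∑ j : Fin k, (x j : ℤ) ≤ (Sx x : ℤ) := by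
    intro x
    rw [hSxdef]
    push_cast
    refine Finset.sum_le_sum fun j _ => ?_
    have h1 : 1 ≤ Rf p (j.1 + 2) := Rf_one_le p _
    have : (1:ℤ) ≤ (Rf p (j.1+2) : ℤ) := by exact_mod_cast h1
    nlinarith [Int.natCast_nonneg (x j)]
  have key : ∀ x : Fin k → ℕ, ∑ i ∈ Finset.range (k+1), g x i * (p:ℤ) ^ i
      = ((d:ℤ) - (Sx x : ℤ)) + (Sx x : ℤ) := by
    intro x
    rw [hgdef]
    simp only [add_mul, Finset.sum_add_distrib]
    congr 1
    · rw [Finset.sum_eq_single 0]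
      · simp
      · intro i _ hi; rw [if_neg hi, zero_mul]
      · intro h; exact absurd (Finset.mem_range.mpr (Nat.succ_pos k)) h
    · simp only [Finset.sum_mul]
      rw [Finset.sum_congr rfl
        (fun i _ => Finset.sum_filter (fun j : Fin k => i ≤ j.1 + 1) (fun j => (x j : ℤ) * (p:ℤ)^i))]
      rw [Finset.sum_comm]
      have hinner : ∀ j : Fin k,
          (∑ i ∈ Finset.range (k+1), if i ≤ j.1 + 1 then (x j : ℤ) * (p:ℤ)^i else 0)
          = (x j : ℤ) * (Rf p (j.1+2) : ℤ) := by
        intro j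
        rw [← Finset.sum_filter]
        have hfe : (Finset.range (k+1)).filter (fun i => i ≤ j.1 + 1) = Finset.range (j.1+2) := by
          ext i
          simp only [Finset.mem_filter, Finset.mem_range]
          have := j.2
          omega
        rw [hfe]
        have : ((Rf p (j.1+2) : ℤ)) = ∑ i ∈ Finset.range (j.1+2), (p:ℤ)^i := by simp [Rf]
        rw [this, Finset.mul_sum]
      rw [Finset.sum_congr rfl (fun j _ => hinner j), hSxdef]
      push_cast
      ring
  have hmem : ∀ x ∈ box, F x ∈ T p (d : ℤ) d := by
    intro x hx
    have hSxd : (Sx x : ℤ) ≤ (d : ℤ) := by exact_mod_cast hSle x hx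
    refine ⟨?_, ?_, ?_, ?_⟩
    · intro i
      rw [hFapp, hgdef]
      simp only
      refine add_nonneg ?_ (Finset.sum_nonneg fun j _ => Int.natCast_nonneg _)
      split_ifs
      · omega
      · exact le_refl 0
    · intro i
      rw [hFapp, hFapp, hgdef]
      simp only
      refine add_le_add ?_ ?_
      · rw [if_neg (by omega)]
        split_ifs
        · omega
        · exact le_refl 0
      · refine Finset.sum_le_sum_of_subset_of_nonneg ?_
          (fun j _ _ => Int.natCast_nonneg _)
        intro j hj
        simp only [Finset.mem_filter, Finset.mem_univ, true_and] at hj ⊢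
        omega
    · rw [hFapp, hgdef]
      simp only [if_pos rfl]
      have hfall : Finset.univ.filter (fun j : Fin k => 0 ≤ j.1 + 1) = Finset.univ :=
        Finset.filter_true_of_mem (fun j _ => Nat.zero_le _)
      rw [hfall]
      have := hxSle x
      omega
    · have hsupp : (F x).support ⊆ Finset.range (k+1) := Finsupp.support_onFinset_subset
      rw [sum_eq_range hsupp]
      have : ∀ i ∈ Finset.range (k+1), (F x) i * (p:ℤ)^i = g x i * (p:ℤ)^i :=
        fun i _ => by rw [hFapp]
      rw [Finset.sum_congr rfl this, key]
      ring
  have hrec : ∀ (x : Fin k → ℕ) (j : Fin k), (x j : ℤ) = g x (j.1+1) - g x (j.1+2) := by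
    intro x j
    rw [hgdef]
    simp only
    rw [if_neg (by omega), if_neg (by omega), zero_add, zero_add]
    have hsplit : Finset.univ.filter (fun j' : Fin k => j.1+1 ≤ j'.1+1)
        = insert j (Finset.univ.filter (fun j' : Fin k => j.1+2 ≤ j'.1+1)) := by
      ext j'
      simp only [Finset.mem_filter, Finset.mem_insert, Finset.mem_univ, true_and]
      constructor
      · intro h
        rcases Nat.lt_or_ge j.1 j'.1 with h' | h'
        · right; omega
        · left; exact Fin.ext (by omega)
      · rintro (rfl | h) <;> omega
    rw [hsplit, Finset.sum_insert (by simp only [Finset.mem_filter, Finset.mem_univ, true_and]; omega)]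
    ring
  have hinj : Set.InjOn F ↑box := by
    intro x₁ _ x₂ _ h
    funext j
    have e1 : g x₁ (j.1+1) = g x₂ (j.1+1) := by
      rw [← hFapp, ← hFapp, h]
    have e2 : g x₁ (j.1+2) = g x₂ (j.1+2) := by
      rw [← hFapp, ← hFapp, h]
    have : (x₁ j : ℤ) = (x₂ j : ℤ) := by rw [hrec x₁ j, hrec x₂ j, e1, e2]
    exact_mod_cast this
  have hboxcard : box.card = ∏ j ∈ Finset.range k, (t j + 1) := by
    rw [hboxdef, Fintype.card_piFinset]
    simp only [Finset.card_range]
    exact Fin.prod_univ_eq_prod_range (fun j => t j + 1) k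
  have hfinT := (T_card p hp d (d : ℤ)).1
  have himg : F '' ↑box ⊆ T p (d : ℤ) d := by
    rintro y ⟨x, hx, rfl⟩
    exact hmem x hx
  calc ∏ j ∈ Finset.range k, (t j + 1) = box.card := hboxcard.symm
  _ = (↑box : Set (Fin k → ℕ)).ncard := (Set.ncard_coe_finset box).symm
  _ = (F '' ↑box).ncard := (Set.ncard_image_of_injOn hinj).symm
  _ ≤ (T p (d : ℤ) d).ncard := Set.ncard_le_ncard himg hfinT

lemma gauss_sum : ∀ k : ℕ, 2 * ∑ j ∈ Finset.range k, (j + 1) = k * (k + 1) := by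
  intro k
  induction k with
  | zero => simp
  | succ k ih =>
      rw [Finset.sum_range_succ]
      have : (k+1) * (k+1+1) = k * (k+1) + 2*(k+1) := by ring
      omega

lemma pow_le_exp_factorial (k : ℕ) (hk : 1 ≤ k) :
    (k : ℝ) ^ k ≤ Real.exp ((k : ℝ) - 1) * (Nat.factorial k : ℝ) := by
  induction k, hk using Nat.le_induction with
  | base => simp
  | succ k hk ih =>
      have hk0 : (0:ℝ) < (k:ℝ) := by exact_mod_cast hk
      have hstep : ((k:ℝ) + 1) ^ k ≤ (k:ℝ) ^ k * Real.exp 1 := by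
        have h1 : (1 + 1/(k:ℝ)) ≤ Real.exp (1/(k:ℝ)) := by
          have := Real.add_one_le_exp (1/(k:ℝ))
          linarith
        have h2 : ((k:ℝ) + 1) = (k:ℝ) * (1 + 1/(k:ℝ)) := by field_simp
        rw [h2, mul_pow]
        refine mul_le_mul_of_nonneg_left ?_ (by positivity)
        have h3 : (1 + 1/(k:ℝ))^k ≤ (Real.exp (1/(k:ℝ)))^k :=
          pow_le_pow_left₀ (by positivity) h1 k
        have h4 : (Real.exp (1/(k:ℝ)))^k = Real.exp ((k:ℝ) * (1/(k:ℝ))) :=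
          (Real.exp_nat_mul _ k).symm
        have h5 : (k:ℝ) * (1/(k:ℝ)) = 1 := by field_simp
        rw [h4, h5] at h3
        exact h3
      have hfact : (Nat.factorial (k+1) : ℝ) = ((k:ℝ)+1) * (Nat.factorial k : ℝ) := by
        rw [Nat.factorial_succ]
        push_cast
        ring
      have hexp : Real.exp ((k:ℝ)+1-1) = Real.exp ((k:ℝ)-1) * Real.exp 1 := by
        rw [← Real.exp_add]
        ring_nf
      calc ((k+1 : ℕ):ℝ) ^ (k+1) = ((k:ℝ)+1) * ((k:ℝ)+1)^k := by push_cast; ring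
      _ ≤ ((k:ℝ)+1) * ((k:ℝ)^k * Real.exp 1) :=
          mul_le_mul_of_nonneg_left hstep (by positivity)
      _ ≤ ((k:ℝ)+1) * ((Real.exp ((k:ℝ)-1) * (Nat.factorial k : ℝ)) * Real.exp 1) := by
          have he : (0:ℝ) < Real.exp 1 := Real.exp_pos 1
          have := mul_le_mul_of_nonneg_right ih he.le
          nlinarith
      _ = Real.exp (((k+1:ℕ):ℝ) - 1) * (Nat.factorial (k+1) : ℝ) := by
          push_cast
          rw [hfact, hexp]
          push_cast
          ring

lemma tprod_le_one' (p : ℕ) : (∏' j : ℕ, (1 - 1 / (((p : ℝ) + 1) ^ (j + 1) + 1))) ≤ 1 := by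
  set f : ℕ → ℝ := fun j => 1 - 1/(((p:ℝ)+1)^(j+1)+1) with hf
  have hpos : ∀ j : ℕ, (0:ℝ) < ((p:ℝ)+1)^(j+1)+1 := by
    intro j
    positivity
  have hle1 : ∀ j, f j ≤ 1 := by
    intro j
    have : 0 ≤ 1/(((p:ℝ)+1)^(j+1)+1) := by positivity
    simp only [hf]
    linarith
  have hge0 : ∀ j, 0 ≤ f j := by
    intro j
    have h1 : (1:ℝ) ≤ ((p:ℝ)+1)^(j+1)+1 := by
      have : (0:ℝ) ≤ ((p:ℝ)+1)^(j+1) := by positivity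
      linarith
    have h2 : 1/(((p:ℝ)+1)^(j+1)+1) ≤ 1 := by
      rw [div_le_one (hpos j)]
      exact h1
    simp only [hf]
    linarith
  by_cases hm : Multipliable f
  · refine le_of_tendsto' hm.hasProd ?_
    intro s
    exact Finset.prod_le_one (fun j _ => hge0 j) (fun j _ => hle1 j)
  · rw [tprod_eq_one_of_not_multipliable hm]

lemma C1_le_half (p : ℕ) : C1 p ≤ 1/2 := by
  rw [C1]
  have := tprod_le_one' p
  linarith

lemma Gamma_mono {x y : ℝ} (hx : 2 ≤ x) (hxy : x ≤ y) : Real.Gamma x ≤ Real.Gamma y := by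
  rcases eq_or_lt_of_le hxy with rfl | h
  · exact le_refl _
  · exact (Real.Gamma_strictMonoOn_Ici (Set.mem_Ici.mpr hx)
      (Set.mem_Ici.mpr (hx.trans hxy)) h).le

end Stmt17

set_option maxHeartbeats 2000000 in
open Stmt17 in
/-- `Z_p(d) ≥ C_1 · d^{(log_{p+1}(d)−3)/2} / Γ(log_{p+1}(d)+1)` for `d ≥ 1`. -/
theorem stmt_17 (p : ℕ) (hp : p.Prime) (d : ℕ) (hd : 1 ≤ d) :
    C1 p * (d : ℝ) ^ ((Real.logb (p + 1) d - 3) / 2) / Real.Gamma (Real.logb (p + 1) d + 1)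
      ≤ (Zp p d : ℝ) := by
  have hp2 : 2 ≤ p := hp.two_le
  set q : ℕ := p + 1 with hqdef
  have hdn0 : d ≠ 0 := by omega
  set b : ℝ := (p : ℝ) + 1 with hbdef
  have hbq : ((q : ℕ) : ℝ) = b := by rw [hqdef, hbdef]; push_cast; ring
  have hp2R : (2:ℝ) ≤ (p:ℝ) := by exact_mod_cast hp2
  have hb1 : (1:ℝ) < b := by rw [hbdef]; linarith
  have hb3 : (3:ℝ) ≤ b := by rw [hbdef]; linarith
  have hb0 : (0:ℝ) < b := by linarith
  set L : ℝ := Real.logb b (d : ℝ) with hLdef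
  have hd0 : (0:ℝ) < (d:ℝ) := by exact_mod_cast (by omega : 0 < d)
  have hd1 : (1:ℝ) ≤ (d:ℝ) := by exact_mod_cast hd
  have hL0 : 0 ≤ L := Real.logb_nonneg hb1 hd1
  have hbL : b ^ L = (d:ℝ) := Real.rpow_logb hb0 (by linarith) hd0
  set K : ℕ := Nat.log q d with hKdef
  have hqK : q ^ K ≤ d := Nat.pow_log_le_self q hdn0
  have hdK : d < q ^ (K+1) := Nat.lt_pow_succ_log_self (by omega) d
  have hlogbpow : ∀ n : ℕ, Real.logb b (((q ^ n : ℕ)) : ℝ) = n := by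
    intro n
    have h1 : (((q ^ n : ℕ)) : ℝ) = b ^ (n : ℕ) := by push_cast [hbq]; ring
    rw [h1, Real.logb_pow, Real.logb_self_eq_one hb1]
    ring
  have hKL : (K:ℝ) ≤ L := by
    have h1 : ((q^K : ℕ) : ℝ) ≤ (d:ℝ) := by exact_mod_cast hqK
    have h2 := Real.logb_le_logb_of_le hb1 (by positivity) h1
    rwa [hlogbpow K] at h2
  have hLK : L ≤ (K:ℝ) + 1 := by
    have h1 : ((d:ℕ) : ℝ) ≤ ((q^(K+1) : ℕ) : ℝ) := by exact_mod_cast hdK.le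
    have h2 := Real.logb_le_logb_of_le hb1 hd0 h1
    rw [hlogbpow (K+1)] at h2
    push_cast at h2
    linarith
  have hΓpos : 0 < Real.Gamma (L + 1) := Real.Gamma_pos_of_pos (by linarith)
  set X : ℝ := (d:ℝ) ^ ((L - 3)/2) with hXdef
  have hX0 : 0 ≤ X := Real.rpow_nonneg hd0.le _
  have hC1 : C1 p ≤ 1/2 := C1_le_half p
  set Np : ℕ := (T p (d:ℤ) d).ncard with hNpdef
  have hfinT := (T_card p hp2 d (d:ℤ)).1
  have hZp : Np ≤ Zp (p:ℤ) (d:ℤ) := by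
    refine le_csSup ⟨((d+1)^(2*d) : ℕ), ?_⟩ ⟨(d:ℤ), (rp_eq p (d:ℤ) d)⟩
    rintro n ⟨M, rfl⟩
    rw [rp_eq]
    exact (T_card p hp2 d M).2
  have hcast : (Np : ℝ) ≤ ((Zp (p:ℤ) (d:ℤ) : ℕ) : ℝ) := by exact_mod_cast hZp
  refine le_trans ?_ hcast
  have hred : C1 p * X / Real.Gamma (L+1) ≤ (1/2) * X / Real.Gamma (L+1) := by
    gcongr
  refine le_trans hred ?_
  clear_value Np X L K
  clear hred hcast hZp
  by_cases hK2 : K ≤ 2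
  · -- small case
    have hNp1 : 1 ≤ Np := by
      have hmem : Finsupp.single 0 (d:ℤ) ∈ T p (d:ℤ) d := by
        refine ⟨?_, ?_, ?_, ?_⟩
        · intro i
          rw [Finsupp.single_apply]
          split_ifs
          · exact_mod_cast Nat.zero_le d
          · exact le_refl 0
        · intro i
          rw [Finsupp.single_apply, Finsupp.single_apply, if_neg (by omega)]
          split_ifs
          · exact_mod_cast Nat.zero_le d
          · exact le_refl 0
        · rw [Finsupp.single_apply, if_pos rfl]
        · rw [Finsupp.sum_single_index (by simp)]
          simp
      have : 0 < Np := by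
        rw [hNpdef]
        exact (Set.ncard_pos hfinT).mpr ⟨_, hmem⟩
      omega
    have hhalf : (1/2) * X ≤ Real.Gamma (L+1) := by
      by_cases hK1 : K ≤ 1
      · have hL2 : L ≤ 2 := by
          have : (K:ℝ) ≤ 1 := by exact_mod_cast hK1
          linarith
        have hG2 : 1 ≤ Real.Gamma (L+2) := by
          have h1 : Real.Gamma 2 ≤ Real.Gamma (L+2) := Gamma_mono (by norm_num) (by linarith)
          rwa [Real.Gamma_two] at h1
        have hGrec : Real.Gamma (L+2) = (L+1) * Real.Gamma (L+1) := by
          have h := Real.Gamma_add_one (show L+1 ≠ 0 by positivity)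
          rw [show L+1+1 = L+2 by ring] at h
          exact h
        have hXL : X * (L+1) ≤ 2 := by
          by_cases hd3 : d ≤ 3
          · have hL1 : L ≤ 1 := by
              have h1 : (d:ℝ) ≤ b := by
                have : (d:ℝ) ≤ 3 := by exact_mod_cast hd3
                linarith
              have h2 := Real.logb_le_logb_of_le hb1 hd0 h1
              rw [Real.logb_self_eq_one hb1] at h2
              rw [hLdef]
              exact h2
            have hXle : X ≤ 1 := by
              rw [hXdef]
              exact Real.rpow_le_one_of_one_le_of_nonpos hd1 (by linarith)
            nlinarith
          · have hd4 : (4:ℝ) ≤ (d:ℝ) := by exact_mod_cast (by omega : 4 ≤ d)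
            have hXle : X ≤ (d:ℝ) ^ (-(1:ℝ)/2) := by
              rw [hXdef]
              exact Real.rpow_le_rpow_of_exponent_le hd1 (by linarith)
            have h2 : (4:ℝ) ^ ((1:ℝ)/2) ≤ (d:ℝ)^((1:ℝ)/2) :=
              Real.rpow_le_rpow (by norm_num) hd4 (by norm_num)
            have h3 : (4:ℝ) ^ ((1:ℝ)/2) = 2 := by
              rw [show (4:ℝ) = (2:ℝ)^(2:ℕ) by norm_num, ← Real.rpow_natCast 2 2,
                ← Real.rpow_mul (by norm_num)]
              norm_num
            have h4 : (d:ℝ) ^ (-(1:ℝ)/2) * (d:ℝ)^((1:ℝ)/2) = 1 := by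
              rw [← Real.rpow_add hd0]
              norm_num
            have hp12 : (0:ℝ) < (d:ℝ)^((1:ℝ)/2) := Real.rpow_pos_of_pos hd0 _
            have h5 : (d:ℝ) ^ (-(1:ℝ)/2) ≤ 1/2 := by nlinarith
            nlinarith
        nlinarith
      · have hK2' : K = 2 := by omega
        have hL2 : 2 ≤ L := by
          have h := hKL
          rw [hK2'] at h
          push_cast at h
          linarith
        have hG3 : 2 ≤ Real.Gamma (L+1) := by
          have h1 : Real.Gamma 3 ≤ Real.Gamma (L+1) := Gamma_mono (by norm_num) (by linarith)
          have h2 : Real.Gamma 3 = 2 := by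
            rw [show (3:ℝ) = ((2:ℕ):ℝ) + 1 by norm_num, Real.Gamma_nat_eq_factorial]
            norm_num [Nat.factorial]
          linarith
        have hXle : X ≤ 1 := by
          have hL3 : L ≤ 3 := by
            have h := hLK
            rw [hK2'] at h
            push_cast at h
            linarith
          rw [hXdef]
          exact Real.rpow_le_one_of_one_le_of_nonpos hd1 (by linarith)
        linarith
    have hle1 : (1/2) * X / Real.Gamma (L+1) ≤ 1 := by
      rw [div_le_one hΓpos]
      linarith
    have : (1:ℝ) ≤ (Np:ℝ) := by exact_mod_cast hNp1
    linarith
  · -- main case : K ≥ 3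
    push_neg at hK2
    have hK3 : 3 ≤ K := hK2
    set k : ℕ := K - 2 with hkdef
    have hk1 : 1 ≤ k := by omega
    have hkK : (k:ℝ) = (K:ℝ) - 2 := by
      have h : k + 2 = K := by omega
      have : ((k + 2 : ℕ):ℝ) = (K:ℝ) := by exact_mod_cast congrArg (Nat.cast (R := ℝ)) h
      push_cast at this
      linarith
    have hk0R : (0:ℝ) < (k:ℝ) := by exact_mod_cast hk1
    have hq0 : 0 < q := by omega
    set t : ℕ → ℕ := fun j => d / (k * q^(j+1)) with htdef
    have hsumt : ∑ j ∈ Finset.range k, t j * Rf p (j+2) ≤ d := by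
      have hterm : ∀ j ∈ Finset.range k, t j * Rf p (j+2) ≤ d / k := by
        intro j _
        have h1 : Rf p (j+2) ≤ q^(j+1) := by
          have := Rf_le_q_pow p (j+1)
          rwa [← hqdef] at this
        calc t j * Rf p (j+2) ≤ t j * q^(j+1) := Nat.mul_le_mul_left _ h1
        _ ≤ d / k := by
          rw [htdef]
          simp only
          rw [← Nat.div_div_eq_div_mul]
          exact Nat.div_mul_le_self _ _
      calc ∑ j ∈ Finset.range k, t j * Rf p (j+2) ≤ ∑ _j ∈ Finset.range k, d / k :=
            Finset.sum_le_sum hterm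
      _ = k * (d / k) := by rw [Finset.sum_const, Finset.card_range, smul_eq_mul]
      _ ≤ d := by rw [mul_comm]; exact Nat.div_mul_le_self d k
    set Pk : ℕ := ∏ j ∈ Finset.range k, (t j + 1) with hPkdef
    have hPkNp : Pk ≤ Np := by rw [hNpdef]; exact T_lower p d hp2 k t hsumt
    set n₁ : ℕ := ∑ j ∈ Finset.range k, (j+1) with hn₁def
    have hgauss : 2 * n₁ = k * (k+1) := gauss_sum k
    have hfac : ∀ j ∈ Finset.range k, (d:ℝ) / ((k:ℝ) * ((q:ℕ):ℝ)^(j+1)) ≤ ((t j : ℝ) + 1) := by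
      intro j _
      have hm0 : 0 < k * q^(j+1) := by positivity
      have hda := Nat.div_add_mod d (k * q^(j+1))
      have hmod := Nat.mod_lt d hm0
      have hnat : d < (t j + 1) * (k * q^(j+1)) := by
        have hexp : (d/(k*q^(j+1)) + 1) * (k*q^(j+1))
            = (k*q^(j+1)) * (d/(k*q^(j+1))) + (k*q^(j+1)) := by ring
        rw [htdef]
        simp only
        omega
      have hposR : (0:ℝ) < (k:ℝ) * ((q:ℕ):ℝ)^(j+1) := by
        have : (0:ℝ) < ((q:ℕ):ℝ) := by exact_mod_cast hq0
        positivity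
      rw [div_le_iff₀ hposR]
      have h2 : ((d:ℕ):ℝ) < (((t j + 1) * (k * q^(j+1)) : ℕ) : ℝ) := by exact_mod_cast hnat
      push_cast at h2
      rw [hbq] at h2
      rw [hbq]
      linarith only [h2]
    have hprod1 : ∏ j ∈ Finset.range k, ((d:ℝ) / ((k:ℝ) * ((q:ℕ):ℝ)^(j+1))) ≤ (Pk:ℝ) := by
      rw [hPkdef]
      push_cast
      refine Finset.prod_le_prod (fun j _ => by positivity) ?_
      intro j hj
      have := hfac j hj
      push_cast at this ⊢
      linarith
    have hprod2 : ∏ j ∈ Finset.range k, ((d:ℝ) / ((k:ℝ) * ((q:ℕ):ℝ)^(j+1)))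
        = (d:ℝ)^k / ((k:ℝ)^k * ((q:ℕ):ℝ)^n₁) := by
      rw [Finset.prod_div_distrib, Finset.prod_const, Finset.card_range,
        Finset.prod_mul_distrib, Finset.prod_const, Finset.card_range,
        Finset.prod_pow_eq_pow_sum]
    have hX : X = b ^ (L * ((L-3)/2)) := by
      rw [hXdef, ← hbL, ← Real.rpow_mul hb0.le]
    have hdk : (d:ℝ)^(k:ℕ) = b ^ (L * (k:ℝ)) := by
      rw [← hbL, ← Real.rpow_natCast (b ^ L) k, ← Real.rpow_mul hb0.le]
    have hqn : ((q:ℕ):ℝ)^(n₁:ℕ) = b ^ ((n₁:ℝ)) := by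
      rw [hbq, ← Real.rpow_natCast b n₁]
    set E : ℝ := L * ((L-3)/2) + (n₁:ℝ) - L * (k:ℝ) with hEdef
    have hn₁R : (n₁:ℝ) = ((K:ℝ)-2) * (((K:ℝ)-2)+1)/2 := by
      have h2n : 2*(n₁:ℝ) = (k:ℝ)*((k:ℝ)+1) := by exact_mod_cast hgauss
      rw [hkK] at h2n
      linarith
    have hE : E ≤ -(K:ℝ) + 2 := by
      have hprodneg : (L - (K:ℝ) - 1) * (L - (K:ℝ) + 2) ≤ 0 :=
        mul_nonpos_iff.mpr (Or.inr ⟨by linarith, by linarith⟩)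
      rw [hEdef, hn₁R, hkK]
      nlinarith
    have hE0 : E ≤ 0 := by
      have : (3:ℝ) ≤ (K:ℝ) := by exact_mod_cast hK3
      linarith
    have hbE : b ^ E ≤ (3:ℝ) ^ E := by
      rw [Real.rpow_def_of_pos hb0, Real.rpow_def_of_pos (by norm_num : (0:ℝ) < 3)]
      apply Real.exp_le_exp.mpr
      have hlog : Real.log 3 ≤ Real.log b := Real.log_le_log (by norm_num) hb3
      nlinarith
    have hlog3 : 1 ≤ Real.log 3 := by
      rw [Real.le_log_iff_exp_le (by norm_num : (0:ℝ) < 3)]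
      calc Real.exp 1 ≤ 2.7182818286 := Real.exp_one_lt_d9.le
      _ ≤ 3 := by norm_num
    have hK3R : (3:ℝ) ≤ (K:ℝ) := by exact_mod_cast hK3
    have hexpk : Real.exp ((k:ℝ)-1) ≤ (3:ℝ)^((K:ℝ)-3) := by
      rw [hkK, show (K:ℝ)-2-1 = (K:ℝ)-3 by ring,
        Real.rpow_def_of_pos (by norm_num : (0:ℝ) < 3)]
      apply Real.exp_le_exp.mpr
      nlinarith
    have hfinal : (1/2) * Real.exp ((k:ℝ)-1) * b ^ E ≤ (K:ℝ) := by
      have h3E : (3:ℝ)^((K:ℝ)-3) * (3:ℝ)^E ≤ 1/3 := by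
        rw [← Real.rpow_add (by norm_num : (0:ℝ) < 3)]
        have hle : (K:ℝ) - 3 + E ≤ -1 := by linarith
        calc (3:ℝ)^((K:ℝ)-3+E) ≤ (3:ℝ)^(-1:ℝ) :=
              Real.rpow_le_rpow_of_exponent_le (by norm_num) hle
        _ = 1/3 := by
            rw [show (-1:ℝ) = ((-1:ℤ):ℝ) by norm_num, Real.rpow_intCast]
            norm_num
      have hbE0 : (0:ℝ) ≤ b ^ E := (Real.rpow_pos_of_pos hb0 E).le
      have h3E0 : (0:ℝ) ≤ (3:ℝ) ^ E := (Real.rpow_pos_of_pos (by norm_num) E).le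
      have hexp0 : (0:ℝ) ≤ Real.exp ((k:ℝ)-1) := (Real.exp_pos _).le
      have h3K0 : (0:ℝ) ≤ (3:ℝ)^((K:ℝ)-3) := (Real.rpow_pos_of_pos (by norm_num) _).le
      have hmm : Real.exp ((k:ℝ)-1) * b ^ E ≤ (3:ℝ)^((K:ℝ)-3) * (3:ℝ)^E :=
        mul_le_mul hexpk hbE hbE0 h3K0
      nlinarith
    -- assemble
    have hkey : (1/2) * X / Real.Gamma (L+1) ≤ (d:ℝ)^k / ((k:ℝ)^k * ((q:ℕ):ℝ)^n₁) := by
      rw [div_le_div_iff₀ hΓpos (by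
        have : (0:ℝ) < ((q:ℕ):ℝ) := by exact_mod_cast hq0
        positivity)]
      rw [hX, hdk, hqn]
      have hKfacN : K * Nat.factorial k ≤ Nat.factorial K := by
        have h1 : K = k + 2 := by omega
        rw [h1, Nat.factorial_succ, Nat.factorial_succ]
        have h2 : Nat.factorial k ≤ (k+1) * Nat.factorial k := Nat.le_mul_of_pos_left _ (by omega)
        nlinarith
      have hKfac : (K:ℝ) * (Nat.factorial k : ℝ) ≤ (Nat.factorial K : ℝ) := by
        exact_mod_cast hKfacN
      have hGam : (Nat.factorial K : ℝ) ≤ Real.Gamma (L+1) := by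
        have h1 := Real.Gamma_nat_eq_factorial K
        rw [← h1]
        exact Gamma_mono (by linarith) (by linarith)
      have hbN : b ^ (L*((L-3)/2)) * b^((n₁:ℝ)) = b ^ E * b ^ (L*(k:ℝ)) := by
        rw [← Real.rpow_add hb0, ← Real.rpow_add hb0]
        congr 1
        rw [hEdef]
        ring
      have hkf := pow_le_exp_factorial k hk1
      have hbx0 : (0:ℝ) ≤ b^(L*((L-3)/2)) := (Real.rpow_pos_of_pos hb0 _).le
      have hbn0 : (0:ℝ) ≤ b^((n₁:ℝ)) := (Real.rpow_pos_of_pos hb0 _).le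
      have hbLk0 : (0:ℝ) < b^(L*(k:ℝ)) := Real.rpow_pos_of_pos hb0 _
      calc (1/2) * b^(L*((L-3)/2)) * ((k:ℝ)^k * b^((n₁:ℝ)))
          ≤ (1/2) * b^(L*((L-3)/2)) * ((Real.exp ((k:ℝ)-1) * (Nat.factorial k : ℝ)) * b^((n₁:ℝ))) := by
            have := mul_le_mul_of_nonneg_right hkf hbn0
            nlinarith
      _ = ((1/2) * Real.exp ((k:ℝ)-1) * b ^ E) * ((Nat.factorial k : ℝ) * b^(L*(k:ℝ))) := by
            rw [show (1/2) * b^(L*((L-3)/2)) * ((Real.exp ((k:ℝ)-1) * (Nat.factorial k : ℝ)) * b^((n₁:ℝ)))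
              = (1/2) * Real.exp ((k:ℝ)-1) * (Nat.factorial k : ℝ) * (b^(L*((L-3)/2)) * b^((n₁:ℝ))) from by ring,
              hbN]
            ring
      _ ≤ (K:ℝ) * ((Nat.factorial k : ℝ) * b^(L*(k:ℝ))) :=
            mul_le_mul_of_nonneg_right hfinal (by positivity)
      _ = ((K:ℝ) * (Nat.factorial k : ℝ)) * b^(L*(k:ℝ)) := by ring
      _ ≤ Real.Gamma (L+1) * b^(L*(k:ℝ)) :=
            mul_le_mul_of_nonneg_right (hKfac.trans hGam) hbLk0.le
      _ = b^(L*(k:ℝ)) * Real.Gamma (L+1) := by ring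
    calc (1/2) * X / Real.Gamma (L+1) ≤ (d:ℝ)^k / ((k:ℝ)^k * ((q:ℕ):ℝ)^n₁) := hkey
    _ = ∏ j ∈ Finset.range k, ((d:ℝ) / ((k:ℝ) * ((q:ℕ):ℝ)^(j+1))) := hprod2.symm
    _ ≤ (Pk:ℝ) := hprod1
    _ ≤ (Np:ℝ) := by exact_mod_cast hPkNp
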